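/- If a real number b satisfies condition (c), then either b = 0 or b ≥ 1. -/

import Mathlib

lemma aux_prod_le (b : ℝ) (hb : 0 ≤ b) (s : Multiset ℂ)
    (h : ∀ z ∈ s, ‖z‖ ≤ b) :
    (s.map (‖·‖)).prod ≤ b ^ s.card := by
  induction s using Multiset.induction with
  | empty => simp
  | cons a s ih =>
    simp only [Multiset.map_cons, Multiset.prod_cons, Multiset.card_cons, pow_succ']
    exact mul_le_mul (h a (Multiset.mem_cons_self a s))
      (ih fun z hz => h z (Multiset.mem_cons_of_mem hz))
      (Multiset.prod_nonneg (by simp +contextual [AbsoluteValue.nonneg]))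
      hb

/-- Condition (c): `b` is a nonnegative real algebraic integer and every complex
root of its minimal polynomial over `ℚ` has modulus at most `b`. -/
def CondC (b : ℝ) : Prop :=
  0 ≤ b ∧ IsIntegral ℤ b ∧
    ∀ z ∈ ((minpoly ℚ b).map (algebraMap ℚ ℂ)).roots, ‖z‖ ≤ b

theorem condC_zero_or_one_le (b : ℝ) (hb : CondC b) : b = 0 ∨ 1 ≤ b := by
  obtain ⟨hb0, hint, hroots⟩ := hb
  by_contra h
  push_neg at h
  obtain ⟨hne, hlt⟩ := h
  have hbpos : 0 < b := lt_of_le_of_ne hb0 (Ne.symm hne)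
  have hintQ : IsIntegral ℚ b := hint.tower_top
  set p := minpoly ℚ b with hp
  set q := p.map (algebraMap ℚ ℂ) with hq
  have hmono : p.Monic := minpoly.monic hintQ
  have hqmono : q.Monic := hmono.map _
  have hsplits : q.Splits := IsAlgClosed.splits q
  have hcoeff : q.coeff 0 = (-1) ^ q.natDegree * q.roots.prod :=
    hsplits.coeff_zero_eq_prod_roots_of_monic hqmono
  have hcard : q.roots.card = q.natDegree :=
    (Polynomial.splits_iff_card_roots.mp hsplits)
  have hdeg : 1 ≤ q.natDegree := by
    rw [hq, Polynomial.natDegree_map]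
    exact minpoly.natDegree_pos hintQ
  -- bound |q.coeff 0|
  have habs : ‖q.coeff 0‖ ≤ b ^ q.natDegree := by
    rw [hcoeff, norm_mul, norm_pow]
    have : ‖(-1 : ℂ)‖ = 1 := by simp
    rw [this, one_pow, one_mul]
    calc ‖q.roots.prod‖ = (q.roots.map (‖·‖)).prod :=
          (Multiset.prod_hom q.roots (normHom : ℂ →*₀ ℝ)).symm
      _ ≤ b ^ q.roots.card := aux_prod_le b hb0 q.roots hroots
      _ = b ^ q.natDegree := by rw [hcard]
  have hlt1 : ‖q.coeff 0‖ < 1 :=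
    lt_of_le_of_lt habs (pow_lt_one₀ hb0 hlt (by omega))
  -- coeff 0 is an integer
  have heq : p = (minpoly ℤ b).map (algebraMap ℤ ℚ) :=
    minpoly.isIntegrallyClosed_eq_field_fractions' ℚ hint
  have hintc : q.coeff 0 = ((minpoly ℤ b).coeff 0 : ℂ) := by
    rw [hq, heq, Polynomial.map_map, Polynomial.coeff_map]
    simp
  have : ((minpoly ℤ b).coeff 0 : ℂ) = 0 := by
    have := hlt1
    rw [hintc] at this
    have h2 : |((minpoly ℤ b).coeff 0 : ℝ)| < 1 := by
      simpa [Complex.norm_intCast] using this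
    norm_cast at h2 ⊢
    exact Int.abs_lt_one_iff.mp h2
  have hc0 : (minpoly ℤ b).coeff 0 = 0 := by exact_mod_cast this
  have hpc0 : p.coeff 0 = 0 := by
    rw [heq, Polynomial.coeff_map, hc0, map_zero]
  exact hne ((minpoly.coeff_zero_eq_zero hintQ).mp hpc0)
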